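/- arXiv:2505.16581 — 2 statements merged into one kernel-verified Lean document; each statement's English description precedes it below -/
import Mathlib

section
/- For any real x ≥ -1/e with x > 0, the principal branch of the Lambert W function satisfies W₀(x) ≤ ln((2x+1)/(1+ln(x+1))). -/
open Real

/-- Hoorfar–Hassani upper bound for the principal branch of the Lambert W function:
for `x > 0` (hence `x ≥ -1/e`), if `W` satisfies `W · exp W = x` with `W ≥ -1`
(which characterises `W = W₀(x)`), then `W ≤ ln((2x+1)/(1+ln(x+1)))`. -/
theorem lambertW_upper_bound (x : ℝ) (hx : -1 / Real.exp 1 ≤ x) (hx' : 0 < x)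
    (W : ℝ) (hW : W * Real.exp W = x) (hW' : -1 ≤ W) :
    W ≤ Real.log ((2 * x + 1) / (1 + Real.log (x + 1))) := by
  have hexp : 0 < Real.exp W := Real.exp_pos W
  have hWpos : 0 < W := by nlinarith
  set L := Real.log (x + 1) with hLdef
  have hL0 : 0 ≤ L := Real.log_nonneg (by linarith)
  have hLx : L ≤ x := by
    have := Real.log_le_sub_one_of_pos (show (0:ℝ) < x + 1 by linarith)
    linarith
  have h1L : 0 < 1 + L := by linarith
  set A := (2 * x + 1) / (1 + L) with hAdef
  have hA1 : 1 ≤ A := by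
    rw [hAdef, le_div_iff₀ h1L]; linarith
  have hApos : 0 < A := by linarith
  have hAmul : A * (1 + L) = 2 * x + 1 := by
    rw [hAdef]; field_simp
  -- log A ≥ L + 1 - (x+1)/A
  have hlogdiv : Real.log ((x + 1) / A) ≤ (x + 1) / A - 1 :=
    Real.log_le_sub_one_of_pos (div_pos (by linarith) hApos)
  have hld : Real.log ((x + 1) / A) = L - Real.log A := by
    rw [Real.log_div (by linarith) (by linarith)]
  rw [hld] at hlogdiv
  -- so A * log A ≥ x
  have hkey : x ≤ A * Real.log A := by
    have h2 : A * (L - Real.log A) ≤ A * ((x + 1) / A - 1) :=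
      mul_le_mul_of_nonneg_left hlogdiv (le_of_lt hApos)
    have h3 : A * ((x + 1) / A) = x + 1 := by field_simp
    nlinarith [h2, h3, hAmul]
  -- now W ≤ log A by monotonicity of t * exp t
  by_contra h
  push_neg at h
  have hlogA0 : 0 ≤ Real.log A := Real.log_nonneg hA1
  have hexpA : A < Real.exp W := by
    calc A = Real.exp (Real.log A) := (Real.exp_log hApos).symm
    _ < Real.exp W := Real.exp_lt_exp.mpr h
  have : A * Real.log A < W * Real.exp W := by
    nlinarith [hexpA, h, hlogA0, hApos]
  nlinarith [hkey]
end

section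
/- Let X₁, ..., X_N be i.i.d. real random variables with mean m and variance Σ, with X̄ their average, and suppose X̄ is Gaussian. Then for any confidence level ε ∈ (0,1), with probability at least 1 - ε, |m - X̄| ≤ √(Σ/N)·√(W₀(2/(πε²))), where W₀ is the principal branch of the Lambert W function. -/
open MeasureTheory ProbabilityTheory Real Filter Topology

open scoped NNReal ENNReal

lemma aux_int {b c : ℝ} (hb : 0 < b) :
    ∫ x in Set.Ioi c, x * rexp (-b * x ^ 2) = (2 * b)⁻¹ * rexp (-b * c ^ 2) := by
  have hb' : (2 : ℝ) * b ≠ 0 := by positivity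
  have A : ∀ x : ℝ, HasDerivAt (fun x : ℝ => -(2 * b)⁻¹ * rexp (-b * x ^ 2))
      (x * rexp (-b * x ^ 2)) x := by
    intro x
    convert ((hasDerivAt_pow 2 x).const_mul (-b)).exp.const_mul (-(2 * b)⁻¹) using 1
    · rfl
    · rfl
    field_simp
    ring
  have B : Tendsto (fun y : ℝ ↦ -(2 * b)⁻¹ * rexp (-b * y ^ 2)) atTop (𝓝 (-(2 * b)⁻¹ * 0)) := by
    refine Tendsto.const_mul _ ?_
    exact Real.tendsto_exp_atBot.comp
      ((tendsto_pow_atTop two_ne_zero).const_mul_atTop_of_neg (neg_lt_zero.2 hb))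
  have := integral_Ioi_of_hasDerivAt_of_tendsto' (a := c) (fun x _ => A x)
    (integrable_mul_exp_neg_mul_sq hb).integrableOn B
  rw [this]; ring

lemma aux_tail {b c : ℝ} (hb : 0 < b) (hc : 0 < c) :
    ∫ x in Set.Ioi c, rexp (-b * x ^ 2) ≤ c⁻¹ * ((2 * b)⁻¹ * rexp (-b * c ^ 2)) := by
  have h1 : ∫ x in Set.Ioi c, rexp (-b * x ^ 2)
      ≤ ∫ x in Set.Ioi c, c⁻¹ * (x * rexp (-b * x ^ 2)) := by
    refine setIntegral_mono_on (integrable_exp_neg_mul_sq hb).integrableOn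
      (((integrable_mul_exp_neg_mul_sq hb).const_mul _).integrableOn) measurableSet_Ioi ?_
    intro x hx
    have hx' : c ≤ x := le_of_lt hx
    have : (1 : ℝ) ≤ c⁻¹ * x := by
      rw [inv_mul_eq_div, le_div_iff₀ hc]; linarith
    nlinarith [Real.exp_pos (-b * x ^ 2), this]
  calc ∫ x in Set.Ioi c, rexp (-b * x ^ 2) ≤ _ := h1
    _ = c⁻¹ * ∫ x in Set.Ioi c, x * rexp (-b * x ^ 2) := by rw [integral_const_mul]
    _ = _ := by rw [aux_int hb]

lemma aux_arith {v' W ε : ℝ} (hv : 0 < v') (hW0 : 0 < W) (hε : 0 < ε)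
    (hW : W * Real.exp W = 2 / (π * ε ^ 2)) :
    2 * ((Real.sqrt (2 * π * v'))⁻¹ * ((Real.sqrt v' * Real.sqrt W)⁻¹ *
      ((2 * (2 * v')⁻¹)⁻¹ * rexp (-(2 * v')⁻¹ * (Real.sqrt v' * Real.sqrt W) ^ 2)))) = ε := by
  have hπ := Real.pi_pos
  have h1 : (2 * (2 * v')⁻¹)⁻¹ = v' := by field_simp
  have hexp : -(2 * v')⁻¹ * (Real.sqrt v' * Real.sqrt W) ^ 2 = -(W / 2) := by
    rw [mul_pow, Real.sq_sqrt hv.le, Real.sq_sqrt hW0.le]; field_simp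
  rw [h1, hexp]
  set L := 2 * ((Real.sqrt (2 * π * v'))⁻¹ * ((Real.sqrt v' * Real.sqrt W)⁻¹ *
      (v' * rexp (-(W / 2))))) with hL
  have hs1 : 0 < Real.sqrt (2 * π * v') := Real.sqrt_pos.mpr (by positivity)
  have hs2 : 0 < Real.sqrt v' := Real.sqrt_pos.mpr hv
  have hs3 : 0 < Real.sqrt W := Real.sqrt_pos.mpr hW0
  have hLpos : 0 < L := by rw [hL]; positivity
  have e1 : Real.sqrt (2 * π * v') ^ 2 = 2 * π * v' := Real.sq_sqrt (by positivity)
  have e2 : Real.sqrt v' ^ 2 = v' := Real.sq_sqrt hv.le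
  have e3 : Real.sqrt W ^ 2 = W := Real.sq_sqrt hW0.le
  have e4 : rexp (-(W / 2)) ^ 2 = rexp (-W) := by
    rw [sq, ← Real.exp_add]; ring_nf
  have hε2 : ε ^ 2 = 2 / (π * (W * Real.exp W)) := by
    rw [hW]
    rw [eq_div_iff (by positivity)]
    field_simp
  have hsq : L ^ 2 = ε ^ 2 := by
    rw [hL, hε2, mul_pow, mul_pow, mul_pow, mul_pow, inv_pow, inv_pow, mul_pow, e1, e2, e3, e4,
      Real.exp_neg]
    have hexpW := Real.exp_pos W
    field_simp
  nlinarith [hsq, hLpos, hε]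

/-- Confidence bound from inverting the Gaussian tail estimate. Let `X 1, ..., X N` be
i.i.d. real random variables with mean `m` and variance `V`, with average `X̄`, and
suppose `X̄` is Gaussian (with mean `m` and variance `V/N`). Then for any confidence
level `ε ∈ (0,1)`, with probability at least `1 - ε`,
`|m - X̄| ≤ √(V/N)·√(W₀(2/(πε²)))`, where `W₀` is the principal branch of the Lambert W
function, characterised for positive arguments by `W·exp W = 2/(πε²)`. -/
theorem gaussian_mc_confidence_bound
    {Ω : Type*} [MeasureSpace Ω] [IsProbabilityMeasure (ℙ : Measure Ω)]
    (N : ℕ) (hN : 0 < N) (X : Fin N → Ω → ℝ) (m : ℝ) (V : NNReal)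
    (hmeas : ∀ i, Measurable (X i))
    (hindep : iIndepFun X ℙ)
    (hident : ∀ i j, IdentDistrib (X i) (X j) ℙ ℙ)
    (hmean : ∀ i, ∫ ω, X i ω = m)
    (hvar : ∀ i, variance (X i) ℙ = V)
    (Xbar : Ω → ℝ) (hXbar : Xbar = fun ω => (1 / (N : ℝ)) * ∑ i, X i ω)
    (hgauss : Measure.map Xbar ℙ = gaussianReal m (V / N))
    (ε : ℝ) (hε : 0 < ε) (hε' : ε < 1)
    (W : ℝ) (hW : W * Real.exp W = 2 / (π * ε ^ 2)) :
    ENNReal.ofReal (1 - ε) ≤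
      ℙ {ω | |m - Xbar ω| ≤ Real.sqrt ((V : ℝ) / N) * Real.sqrt W} := by
  have hπ := Real.pi_pos
  have hrhs : 0 < 2 / (π * ε ^ 2) := by positivity
  have hW0 : 0 < W := by
    by_contra h
    push_neg at h
    nlinarith [Real.exp_pos W, hW]
  set c : ℝ := Real.sqrt ((V : ℝ) / N) * Real.sqrt W with hc
  have hc0 : 0 ≤ c := by positivity
  set v : ℝ≥0 := V / N with hv
  have hvr : ((v : ℝ≥0) : ℝ) = (V : ℝ) / N := by
    rw [hv, NNReal.coe_div]; norm_num
  have hXm : Measurable Xbar := by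
    rw [hXbar]
    exact measurable_const.mul (Finset.measurable_sum _ fun i _ => hmeas i)
  have hsm : MeasurableSet {x : ℝ | |m - x| ≤ c} :=
    (isClosed_le ((continuous_const.sub continuous_id).abs) continuous_const).measurableSet
  have hmap : ℙ {ω | |m - Xbar ω| ≤ c} = gaussianReal m v {x | |m - x| ≤ c} := by
    rw [← hgauss, Measure.map_apply hXm hsm]; rfl
  rw [hmap]
  by_cases hv0 : v = 0
  · rw [hv0, gaussianReal_zero_var, Measure.dirac_apply' _ hsm]
    have hmem : m ∈ {x : ℝ | |m - x| ≤ c} := by simp [hc0]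
    rw [Set.indicator_of_mem hmem, Pi.one_apply]
    exact ENNReal.ofReal_le_one.mpr (by linarith)
  · have hvpos : 0 < ((v : ℝ≥0) : ℝ) := by
      exact_mod_cast pos_iff_ne_zero.mpr hv0
    have hcpos : 0 < c := by
      rw [hc, ← hvr]
      exact mul_pos (Real.sqrt_pos.mpr hvpos) (Real.sqrt_pos.mpr hW0)
    have key : (gaussianReal m v) {x : ℝ | |m - x| ≤ c}ᶜ ≤ ENNReal.ofReal ε := by
      have hmap0 : gaussianReal m v = (gaussianReal 0 v).map (· + m) := by
        rw [gaussianReal_map_add_const]; rw [zero_add]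
      have hpre : ((· + m) ⁻¹' {x : ℝ | |m - x| ≤ c}ᶜ) = {x : ℝ | c < |x|} := by
        ext x
        simp only [Set.mem_preimage, Set.mem_compl_iff, Set.mem_setOf_eq, not_le]
        rw [show m - (x + m) = -x by ring, abs_neg]
      have hcompl : (gaussianReal m v) {x : ℝ | |m - x| ≤ c}ᶜ
          = (gaussianReal 0 v) {x : ℝ | c < |x|} := by
        rw [hmap0, Measure.map_apply (measurable_add_const m) hsm.compl, hpre]
      rw [hcompl]
      have hsplit : {x : ℝ | c < |x|} ⊆ Set.Iio (-c) ∪ Set.Ioi c := by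
        intro x hx
        simp only [Set.mem_setOf_eq] at hx
        rcases lt_abs.mp hx with h | h
        · exact Or.inr h
        · exact Or.inl (by simp only [Set.mem_Iio]; linarith)
      have hsym : (gaussianReal 0 v) (Set.Iio (-c)) = (gaussianReal 0 v) (Set.Ioi c) := by
        have hone : (⟨(-1 : ℝ) ^ 2, sq_nonneg _⟩ : ℝ≥0) = 1 := by ext; norm_num
        have hneg : (gaussianReal 0 v).map (fun x => (-1 : ℝ) * x) = gaussianReal 0 v := by
          rw [gaussianReal_map_const_mul]
          congr 1
          · simp
          · ext; simp
        conv_lhs => rw [← hneg]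
        rw [Measure.map_apply (measurable_const_mul _) measurableSet_Iio]
        congr 1
        ext x
        simp only [Set.mem_preimage, Set.mem_Iio, Set.mem_Ioi, neg_mul, one_mul, neg_lt_neg_iff]
      set b : ℝ := (2 * ((v : ℝ≥0) : ℝ))⁻¹ with hb
      have hbpos : 0 < b := by rw [hb]; positivity
      have hvne : ((v : ℝ≥0) : ℝ) ≠ 0 := ne_of_gt hvpos
      have hpdf : ∀ x : ℝ, gaussianPDFReal 0 v x
          = (Real.sqrt (2 * π * ((v : ℝ≥0) : ℝ)))⁻¹ * rexp (-b * x ^ 2) := by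
        intro x
        rw [gaussianPDFReal]
        congr 1
        rw [sub_zero, hb]
        field_simp
      have hbound : (gaussianReal 0 v) (Set.Ioi c)
          ≤ ENNReal.ofReal ((Real.sqrt (2 * π * ((v : ℝ≥0) : ℝ)))⁻¹ *
            (c⁻¹ * ((2 * b)⁻¹ * rexp (-b * c ^ 2)))) := by
        rw [gaussianReal_apply_eq_integral 0 hv0]
        refine ENNReal.ofReal_le_ofReal ?_
        calc ∫ x in Set.Ioi c, gaussianPDFReal 0 v x
            = (Real.sqrt (2 * π * ((v : ℝ≥0) : ℝ)))⁻¹ * ∫ x in Set.Ioi c, rexp (-b * x ^ 2) := by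
              simp_rw [hpdf]; rw [integral_const_mul]
          _ ≤ _ := mul_le_mul_of_nonneg_left (aux_tail hbpos hcpos) (by positivity)
      set T : ℝ := (Real.sqrt (2 * π * ((v : ℝ≥0) : ℝ)))⁻¹ *
        (c⁻¹ * ((2 * b)⁻¹ * rexp (-b * c ^ 2))) with hT
      have hT0 : 0 ≤ T := by
        rw [hT]; positivity
      have h2T : 2 * T = ε := by
        rw [hT, hb]
        have hcv : c = Real.sqrt ((v : ℝ≥0) : ℝ) * Real.sqrt W := by rw [hc, hvr]
        rw [hcv]
        exact aux_arith hvpos hW0 hε hW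
      calc (gaussianReal 0 v) {x : ℝ | c < |x|}
          ≤ (gaussianReal 0 v) (Set.Iio (-c) ∪ Set.Ioi c) := measure_mono hsplit
        _ ≤ (gaussianReal 0 v) (Set.Iio (-c)) + (gaussianReal 0 v) (Set.Ioi c) :=
            measure_union_le _ _
        _ = (gaussianReal 0 v) (Set.Ioi c) + (gaussianReal 0 v) (Set.Ioi c) := by rw [hsym]
        _ ≤ ENNReal.ofReal T + ENNReal.ofReal T := add_le_add hbound hbound
        _ = ENNReal.ofReal (2 * T) := by rw [← ENNReal.ofReal_add hT0 hT0]; ring_nf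
        _ = ENNReal.ofReal ε := by rw [h2T]
    have h1 : (gaussianReal m v) {x : ℝ | |m - x| ≤ c}
        = 1 - (gaussianReal m v) {x : ℝ | |m - x| ≤ c}ᶜ := by
      rw [prob_compl_eq_one_sub hsm, ENNReal.sub_sub_cancel ENNReal.one_ne_top prob_le_one]
    rw [h1]
    calc ENNReal.ofReal (1 - ε) = 1 - ENNReal.ofReal ε := by
          rw [ENNReal.ofReal_sub _ hε.le, ENNReal.ofReal_one]
      _ ≤ 1 - (gaussianReal m v) {x : ℝ | |m - x| ≤ c}ᶜ := tsub_le_tsub_left key 1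
end
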